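/- Let P be a bichromatic convex point set with n red and n blue points that has a balanced 4-block coloring. Then the maximum of cr(M) over all straight-line bichromatic perfect matchings M on P equals 3n²/8 − n/2 if n ≡ 0 (mod 4), 3n²/8 − n/2 + 1/8 if n ≡ 1 (mod 4), 3n²/8 − n/2 − 1/2 if n ≡ 2 (mod 4), and 3n²/8 − n/2 + 1/8 if n ≡ 3 (mod 4). -/

import Mathlib

open Finset

/-- Two closed-segment edges cross: their open segments (relative interiors) intersect. -/
def SegCross (a b c d : ℝ × ℝ) : Prop :=
  ∃ x : ℝ × ℝ, x ∈ openSegment ℝ a b ∧ x ∈ openSegment ℝ c d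

/-- `f` is a straight-line bichromatic perfect matching on points indexed by `Fin m`
with coloring `c` (`true` = red, `false` = blue): it is a fixed-point-free involution
matching points of different colors. -/
def IsBPM (m : ℕ) (c : Fin m → Bool) (f : Fin m → Fin m) : Prop :=
  Function.Involutive f ∧ (∀ i, f i ≠ i) ∧ (∀ i, c (f i) ≠ c i)

/-- Number of crossing pairs of edges of the matching `f` on the points `p`:
each edge is represented by its smaller endpoint. -/
noncomputable def crNum (m : ℕ) (p : Fin m → ℝ × ℝ) (f : Fin m → Fin m) : ℕ :=
  Nat.card {q : Fin m × Fin m // q.1 < q.2 ∧ q.1 < f q.1 ∧ q.2 < f q.2 ∧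
    SegCross (p q.1) (p (f q.1)) (p q.2) (p (f q.2))}

/-- The points `p 0, p 1, …` are distinct and in strictly convex position,
listed in clockwise order (every triple is negatively oriented). -/
def ConvexCW (m : ℕ) (p : Fin m → ℝ × ℝ) : Prop :=
  Function.Injective p ∧
  ∀ i j k : Fin m, (i : ℕ) < (j : ℕ) → (j : ℕ) < (k : ℕ) →
    ((p j).1 - (p i).1) * ((p k).2 - (p i).2) -
      ((p j).2 - (p i).2) * ((p k).1 - (p i).1) < 0

/-- The points are distinct and in general position: no three collinear. -/
def GenPos (m : ℕ) (p : Fin m → ℝ × ℝ) : Prop :=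
  Function.Injective p ∧
  ∀ i j k : Fin m, i ≠ j → i ≠ k → j ≠ k →
    ¬ Collinear ℝ ({p i, p j, p k} : Set (ℝ × ℝ))

/-- The coloring has exactly `n` red points (hence `n` blue points among the `2n`). -/
def Bichrom (n : ℕ) (c : Fin (2 * n) → Bool) : Prop :=
  (Finset.univ.filter fun i : Fin (2 * n) => c i = true).card = n

/-- The coloring alternates along the (cyclic) convex hull order. -/
def Alternating (m : ℕ) (c : Fin m → Bool) : Prop :=
  ∀ i j : Fin m, (j : ℕ) = ((i : ℕ) + 1) % m → c j ≠ c i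

/-- The coloring is a 4-block coloring: starting at position `t` along the cyclic order,
there come `r1` red points, then `b1` blue, then `r2` red, then `b2` blue,
all four blocks nonempty. -/
def FourBlockAt (n : ℕ) (c : Fin (2 * n) → Bool) (t : Fin (2 * n))
    (r1 b1 r2 b2 : ℕ) : Prop :=
  0 < r1 ∧ 0 < b1 ∧ 0 < r2 ∧ 0 < b2 ∧
  r1 + b1 + r2 + b2 = 2 * n ∧ r1 + r2 = n ∧
  ∀ j : Fin (2 * n), c (t + j) =
    if (j : ℕ) < r1 then true
    else if (j : ℕ) < r1 + b1 then false
    else if (j : ℕ) < r1 + b1 + r2 then true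
    else false

/-- The coloring is a 4-block coloring (for some start and block sizes). -/
def FourBlock (n : ℕ) (c : Fin (2 * n) → Bool) : Prop :=
  ∃ t r1 b1 r2 b2, FourBlockAt n c t r1 b1 r2 b2

/-- The coloring is a balanced 4-block coloring: any two block sizes differ by at most 1. -/
def Balanced4 (n : ℕ) (c : Fin (2 * n) → Bool) : Prop :=
  ∃ t r1 b1 r2 b2, FourBlockAt n c t r1 b1 r2 b2 ∧
    ∀ x ∈ [r1, b1, r2, b2], ∀ y ∈ [r1, b1, r2, b2], x ≤ y + 1

/-- The value `3n²/8 − n/2 + c` with `c` depending on `n mod 4`. -/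
def maxCrBound (n : ℕ) : ℚ :=
  3 * (n : ℚ) ^ 2 / 8 - (n : ℚ) / 2 +
    (if n % 4 = 0 then 0 else if n % 4 = 2 then -(1 / 2 : ℚ) else 1 / 8)

/-- `i` and `j` lie in the same monochromatic block: there is a cyclic arc from `i` to
`j` consisting of points of the color of `i`. -/
def SameBlockArc (m : ℕ) (c : Fin m → Bool) (i j : Fin m) : Prop :=
  ∃ d : Fin m, j = i + d ∧ ∀ e : Fin m, e ≤ d → c (i + e) = c i


namespace Aux


def det3 (u v w : ℝ × ℝ) : ℝ :=
  (v.1 - u.1) * (w.2 - u.2) - (v.2 - u.2) * (w.1 - u.1)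

lemma det3_def (u v w : ℝ × ℝ) :
    det3 u v w = (v.1 - u.1) * (w.2 - u.2) - (v.2 - u.2) * (w.1 - u.1) := rfl

lemma det3_cyc (u v w : ℝ × ℝ) : det3 u v w = det3 v w u := by
  simp only [det3]; ring

lemma det3_swap (u v w : ℝ × ℝ) : det3 u v w = - det3 u w v := by
  simp only [det3]; ring

lemma det3_affine (u v w w' : ℝ × ℝ) (θ : ℝ) :
    det3 u v ((1 - θ) • w + θ • w') = (1 - θ) * det3 u v w + θ * det3 u v w' := by
  simp only [det3, Prod.smul_fst, Prod.smul_snd, Prod.fst_add, Prod.snd_add, smul_eq_mul]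
  ring

lemma mem_openSegment_iff {a b x : ℝ × ℝ} :
    x ∈ openSegment ℝ a b ↔ ∃ θ : ℝ, 0 < θ ∧ θ < 1 ∧ (1 - θ) • a + θ • b = x := by
  rw [openSegment_eq_image]
  constructor
  · rintro ⟨θ, hθ, rfl⟩; exact ⟨θ, hθ.1, hθ.2, rfl⟩
  · rintro ⟨θ, h1, h2, rfl⟩; exact ⟨θ, ⟨h1, h2⟩, rfl⟩

lemma det3_eq_zero_of_mem {a b x : ℝ × ℝ} (hx : x ∈ openSegment ℝ a b) :
    det3 a b x = 0 := by
  rcases mem_openSegment_iff.1 hx with ⟨θ, _, _, rfl⟩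
  rw [det3_affine]
  have h1 : det3 a b a = 0 := by simp only [det3]; ring
  have h2 : det3 a b b = 0 := by simp only [det3]; ring
  rw [h1, h2]; ring

lemma not_segCross_of_dets {a b c d : ℝ × ℝ}
    (h : 0 < det3 a b c * det3 a b d) : ¬ SegCross a b c d := by
  rintro ⟨x, hx1, hx2⟩
  have h0 : det3 a b x = 0 := det3_eq_zero_of_mem hx1
  rcases mem_openSegment_iff.1 hx2 with ⟨θ, hθ0, hθ1, rfl⟩
  rw [det3_affine] at h0
  rcases mul_pos_iff.1 h with ⟨hc, hd⟩ | ⟨hc, hd⟩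
  · nlinarith
  · nlinarith

lemma segCross_of_dets {a b c d : ℝ × ℝ}
    (hcd : det3 c d a * det3 c d b < 0)
    (hab : det3 a b c * det3 a b d < 0) : SegCross a b c d := by
  set s := det3 c d a with hs
  set t := det3 c d b with ht
  have hst : s - t ≠ 0 := by
    rcases mul_neg_iff.1 hcd with ⟨h1, h2⟩ | ⟨h1, h2⟩ <;> intro h <;> nlinarith
  set θ : ℝ := s / (s - t) with hθ
  have hθ0 : 0 < θ := by
    rcases mul_neg_iff.1 hcd with ⟨h1, h2⟩ | ⟨h1, h2⟩
    · exact div_pos h1 (by linarith)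
    · exact div_pos_of_neg_of_neg h1 (by linarith)
  have hθ1 : θ < 1 := by
    rcases mul_neg_iff.1 hcd with ⟨h1, h2⟩ | ⟨h1, h2⟩
    · rw [hθ, div_lt_one (by linarith)]; linarith
    · rw [hθ, div_lt_one_of_neg (by linarith)]; linarith
  set x : ℝ × ℝ := (1 - θ) • a + θ • b with hx
  have hxab : x ∈ openSegment ℝ a b := mem_openSegment_iff.2 ⟨θ, hθ0, hθ1, rfl⟩
  have h0 : det3 c d x = 0 := by
    rw [hx, det3_affine, ← hs, ← ht, hθ]
    field_simp
    ring
  have habx : det3 a b x = 0 := by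
    rw [hx, det3_affine]
    have h1 : det3 a b a = 0 := by simp only [det3]; ring
    have h2 : det3 a b b = 0 := by simp only [det3]; ring
    rw [h1, h2]; ring
  -- now find μ with x = (1-μ) • c + μ • d
  have hcd' : c ≠ d := by
    rintro rfl
    have : det3 c c a = 0 := by simp only [det3]; ring
    rw [← hs] at this; rw [this] at hcd; simp at hcd
  have hkey : ∃ μ : ℝ, (1 - μ) • c + μ • d = x := by
    by_cases h1 : d.1 ≠ c.1
    · refine ⟨(x.1 - c.1) / (d.1 - c.1), ?_⟩
      have hd1 : d.1 - c.1 ≠ 0 := fun h => h1 (by linarith)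
      have hdet : (d.1 - c.1) * (x.2 - c.2) - (d.2 - c.2) * (x.1 - c.1) = 0 := by
        have := h0; simp only [det3] at this; linarith
      apply Prod.ext
      · simp only [Prod.fst_add, Prod.smul_fst, smul_eq_mul]
        field_simp
        ring
      · simp only [Prod.snd_add, Prod.smul_snd, smul_eq_mul]
        field_simp
        nlinarith [hdet]
    · push_neg at h1
      have h2 : d.2 - c.2 ≠ 0 := by
        intro h
        apply hcd'
        apply Prod.ext h1.symm (by linarith)
      refine ⟨(x.2 - c.2) / (d.2 - c.2), ?_⟩
      have hdet : (d.1 - c.1) * (x.2 - c.2) - (d.2 - c.2) * (x.1 - c.1) = 0 := by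
        have := h0; simp only [det3] at this; linarith
      apply Prod.ext
      · simp only [Prod.fst_add, Prod.smul_fst, smul_eq_mul]
        field_simp
        nlinarith [hdet]
      · simp only [Prod.snd_add, Prod.smul_snd, smul_eq_mul]
        field_simp
        ring
  rcases hkey with ⟨μ, hμ⟩
  have hμdet : (1 - μ) * det3 a b c + μ * det3 a b d = 0 := by
    rw [← det3_affine, hμ, habx]
  have hμ0 : 0 < μ ∧ μ < 1 := by
    rcases mul_neg_iff.1 hab with ⟨h1, h2⟩ | ⟨h1, h2⟩
    · constructor <;> nlinarith
    · constructor <;> nlinarith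
  exact ⟨x, hxab, mem_openSegment_iff.2 ⟨μ, hμ0.1, hμ0.2, hμ⟩⟩



section Convex
variable {m : ℕ} {p : Fin m → ℝ × ℝ} (hconv : ConvexCW m p)

include hconv in
lemma cw {i j k : Fin m} (hij : (i:ℕ) < j) (hjk : (j:ℕ) < k) :
    det3 (p i) (p j) (p k) < 0 := by
  rw [det3_def]; exact hconv.2 i j k hij hjk

include hconv in
lemma cross_of_sorted {i j k l : Fin m} (h1 : (i:ℕ) < j) (h2 : (j:ℕ) < k) (h3 : (k:ℕ) < l) :
    SegCross (p i) (p k) (p j) (p l) := by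
  apply segCross_of_dets
  · have ha : det3 (p j) (p l) (p i) < 0 := by
      rw [det3_cyc, det3_cyc]; exact cw hconv h1 (lt_trans h2 h3)
    have hb : 0 < det3 (p j) (p l) (p k) := by
      rw [det3_swap]
      simp only [neg_pos]
      exact cw hconv h2 h3
    exact mul_neg_of_neg_of_pos ha hb
  · have ha : 0 < det3 (p i) (p k) (p j) := by
      rw [det3_swap]; simp only [neg_pos]; exact cw hconv h1 h2
    have hb : det3 (p i) (p k) (p l) < 0 := cw hconv (lt_trans h1 h2) h3
    exact mul_neg_of_pos_of_neg ha hb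

include hconv in
lemma noncross_disjoint {i j k l : Fin m} (h1 : (i:ℕ) < j) (h2 : (j:ℕ) < k) (h3 : (k:ℕ) < l) :
    ¬ SegCross (p i) (p j) (p k) (p l) := by
  apply not_segCross_of_dets
  exact mul_pos_of_neg_of_neg (cw hconv h1 h2) (cw hconv h1 (lt_trans h2 h3))

include hconv in
lemma noncross_nested {i j k l : Fin m} (h1 : (i:ℕ) < j) (h2 : (j:ℕ) < k) (h3 : (k:ℕ) < l) :
    ¬ SegCross (p i) (p l) (p j) (p k) := by
  apply not_segCross_of_dets
  have ha : 0 < det3 (p i) (p l) (p j) := by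
    rw [det3_swap]; simp only [neg_pos]; exact cw hconv h1 (lt_trans h2 h3)
  have hb : 0 < det3 (p i) (p l) (p k) := by
    rw [det3_swap]; simp only [neg_pos]; exact cw hconv (lt_trans h1 h2) h3
  exact mul_pos ha hb

end Convex

def Dcount (m : ℕ) (f : Fin m → Fin m) : ℕ :=
  ((univ : Finset (Fin m × Fin m)).filter fun q =>
    q.1 < q.2 ∧ q.2 < f q.1 ∧ f q.1 < f q.2).card

lemma crNum_eq_D {m : ℕ} {p : Fin m → ℝ × ℝ} {f : Fin m → Fin m}
    (hconv : ConvexCW m p) (hinv : Function.Involutive f) (hfix : ∀ i, f i ≠ i) :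
    crNum m p f = Dcount m f := by
  have hiff : ∀ q : Fin m × Fin m,
      (q.1 < q.2 ∧ q.1 < f q.1 ∧ q.2 < f q.2 ∧
        SegCross (p q.1) (p (f q.1)) (p q.2) (p (f q.2))) ↔
      (q.1 < q.2 ∧ q.2 < f q.1 ∧ f q.1 < f q.2) := by
    rintro ⟨i, j⟩
    simp only []
    constructor
    · rintro ⟨h1, h2, h3, h4⟩
      have hne : j ≠ f i := by
        intro h
        have : f j = i := by rw [h, hinv]
        rw [this] at h3
        exact absurd (lt_trans h1 h3) (lt_irrefl i)
      rcases lt_or_gt_of_ne hne with hlt | hgt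
      · refine ⟨h1, hlt, ?_⟩
        have hne2 : f i ≠ f j := fun h => (by
          have := hinv.injective h
          exact absurd (this ▸ h1) (lt_irrefl _))
        rcases lt_or_gt_of_ne hne2 with h' | h'
        · exact h'
        · have h'' : f j < f i := h'
          exact absurd h4 (noncross_nested hconv (Fin.lt_def.1 h1) (Fin.lt_def.1 h3)
            (Fin.lt_def.1 h''))
      · have hgt' : f i < j := hgt
        exact absurd h4 (noncross_disjoint hconv (Fin.lt_def.1 h2) (Fin.lt_def.1 hgt')
          (Fin.lt_def.1 h3))
    · rintro ⟨h1, h2, h3⟩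
      exact ⟨h1, lt_trans h1 h2, lt_trans h2 h3,
        cross_of_sorted hconv (Fin.lt_def.1 h1) (Fin.lt_def.1 h2) (Fin.lt_def.1 h3)⟩
  unfold crNum Dcount
  rw [Nat.card_congr (Equiv.subtypeEquivRight hiff), Nat.card_eq_fintype_card,
    Fintype.card_subtype]



lemma segCross_comm {a b c d : ℝ × ℝ} : SegCross a b c d ↔ SegCross c d a b :=
  exists_congr fun _ => and_comm

lemma segCross_swap_left {a b c d : ℝ × ℝ} : SegCross a b c d ↔ SegCross b a c d := by
  unfold SegCross; rw [openSegment_symm]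

lemma segCross_swap_right {a b c d : ℝ × ℝ} : SegCross a b c d ↔ SegCross a b d c := by
  unfold SegCross; rw [openSegment_symm ℝ c d]

section Can
variable {m : ℕ} {f : Fin m → Fin m} (hinv : Function.Involutive f) (hfix : ∀ i, f i ≠ i)

def can (f : Fin m → Fin m) (x : Fin m) : Fin m := min x (f x)

include hinv hfix in
lemma can_lt (x : Fin m) : can f x < f (can f x) := by
  unfold can
  rcases le_or_gt x (f x) with h | h
  · rw [min_eq_left h]; exact lt_of_le_of_ne h (Ne.symm (hfix x))
  · rw [min_eq_right h.le, hinv]; exact h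

include hinv in
lemma can_f (x : Fin m) : can f (f x) = can f x := by
  unfold can; rw [hinv]; exact min_comm _ _

lemma can_eq_self {x : Fin m} (h : x < f x) : can f x = x := min_eq_left h.le

lemma can_cases (x : Fin m) : can f x = x ∨ can f x = f x := by
  unfold can
  rcases le_total x (f x) with h | h
  · exact Or.inl (min_eq_left h)
  · exact Or.inr (min_eq_right h)

include hinv in
lemma segCross_canL {p : Fin m → ℝ × ℝ} (x : Fin m) (c d : ℝ × ℝ) :
    SegCross (p x) (p (f x)) c d ↔ SegCross (p (can f x)) (p (f (can f x))) c d := by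
  rcases can_cases (f := f) x with h | h
  · rw [h]
  · rw [h, hinv]; exact segCross_swap_left

include hinv in
lemma segCross_canR {p : Fin m → ℝ × ℝ} (x : Fin m) (c d : ℝ × ℝ) :
    SegCross c d (p x) (p (f x)) ↔ SegCross c d (p (can f x)) (p (f (can f x))) := by
  rw [segCross_comm, segCross_canL hinv, segCross_comm]

end Can

section Reindex
variable {m : ℕ} (e : Fin m ≃ Fin m) {f : Fin m → Fin m}
  (hinv : Function.Involutive f) (hfix : ∀ i, f i ≠ i)

include hinv in
lemma rt_can (x : Fin m) :
    can (fun i => e.symm (f (e i))) (e.symm (can f (e x))) =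
      can (fun i => e.symm (f (e i))) x := by
  have hinv' : Function.Involutive (fun i => e.symm (f (e i))) := by
    intro i
    simp only [Equiv.apply_symm_apply]
    rw [hinv (e i), Equiv.symm_apply_apply]
  rcases can_cases (f := f) (e x) with h | h
  · rw [h, Equiv.symm_apply_apply]
  · rw [h]
    exact can_f hinv' x

include hinv hfix in
lemma crNum_reindex (p : Fin m → ℝ × ℝ) :
    crNum m (fun i => p (e i)) (fun i => e.symm (f (e i))) = crNum m p f := by
  classical
  set f' : Fin m → Fin m := fun i => e.symm (f (e i)) with hf'
  have hef' : ∀ x, e (f' x) = f (e x) := fun x => Equiv.apply_symm_apply e _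
  have hinv' : Function.Involutive f' := by intro i; simp [hf', hinv (e i)]
  have hfix' : ∀ i, f' i ≠ i := by
    intro i h
    exact hfix (e i) (by rw [← hef' i, h])
  have hcard : ∀ (P : Fin m × Fin m → Prop) [DecidablePred P],
      Nat.card {q : Fin m × Fin m // P q} = (univ.filter P).card := by
    intro P _
    rw [Nat.card_eq_fintype_card, Fintype.card_subtype]
  unfold crNum
  rw [hcard, hcard]
  -- the bijection
  refine Finset.card_bij'
    (i := fun q _ => if can f (e q.1) ≤ can f (e q.2)
      then (can f (e q.1), can f (e q.2)) else (can f (e q.2), can f (e q.1)))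
    (j := fun q _ => if can f' (e.symm q.1) ≤ can f' (e.symm q.2)
      then (can f' (e.symm q.1), can f' (e.symm q.2))
      else (can f' (e.symm q.2), can f' (e.symm q.1))) ?_ ?_ ?_ ?_
  · -- maps to target
    rintro ⟨i, j⟩ hq
    simp only [mem_filter, mem_univ, true_and] at hq ⊢
    obtain ⟨h1, h2, h3, h4⟩ := hq
    have h4' : SegCross (p (e i)) (p (f (e i))) (p (e j)) (p (f (e j))) := by
      have := h4
      simp only [hef'] at this
      exact this
    set a := can f (e i) with ha
    set b := can f (e j) with hb
    have hal : a < f a := can_lt hinv hfix (e i)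
    have hbl : b < f b := can_lt hinv hfix (e j)
    have hseg : SegCross (p a) (p (f a)) (p b) (p (f b)) := by
      rw [← segCross_canL hinv, ← segCross_canR hinv]; exact h4'
    have hab : a ≠ b := by
      intro h
      have c1 := can_cases (f := f) (e i)
      have c2 := can_cases (f := f) (e j)
      rw [← ha] at c1; rw [← hb] at c2
      have hej : e j = e i ∨ e j = f (e i) := by
        rcases c1 with d1 | d1 <;> rcases c2 with d2 | d2
        · exact Or.inl (by rw [← d2, ← h, d1])
        · right
          have h1' : e i = f (e j) := by rw [← d1, h, d2]
          have h2' := congrArg f h1'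
          rw [hinv] at h2'
          exact h2'.symm
        · exact Or.inr (by rw [← d2, ← h, d1])
        · left
          have h1' : f (e i) = f (e j) := by rw [← d1, h, d2]
          have h2' := congrArg f h1'
          rw [hinv, hinv] at h2'
          exact h2'.symm
      rcases hej with hh | hh
      · have : j = i := e.injective hh
        rw [this] at h1
        exact lt_irrefl _ h1
      · have hfj : f' j = i := by
          simp only [hf']
          rw [hh, hinv (e i), Equiv.symm_apply_apply]
        rw [hfj] at h3
        exact absurd (lt_trans h1 h3) (lt_irrefl _)
    rcases le_or_gt a b with hle | hlt
    · rw [if_pos hle]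
      exact ⟨lt_of_le_of_ne hle hab, hal, hbl, hseg⟩
    · rw [if_neg (not_le.2 hlt)]
      exact ⟨hlt, hbl, hal, segCross_comm.1 hseg⟩
  · -- maps back
    rintro ⟨u, v⟩ hq
    simp only [mem_filter, mem_univ, true_and] at hq ⊢
    obtain ⟨h1, h2, h3, h4⟩ := hq
    set a := can f' (e.symm u) with ha
    set b := can f' (e.symm v) with hb
    have hal : a < f' a := can_lt hinv' hfix' (e.symm u)
    have hbl : b < f' b := can_lt hinv' hfix' (e.symm v)
    have hseg0 : SegCross (p (e (e.symm u))) (p (f (e (e.symm u))))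
        (p (e (e.symm v))) (p (f (e (e.symm v)))) := by
      simp only [Equiv.apply_symm_apply]; exact h4
    have hseg : SegCross (p (e a)) (p (e (f' a))) (p (e b)) (p (e (f' b))) := by
      have hL := segCross_canL (f := f') hinv' (p := fun i => p (e i)) (e.symm u)
        (p (e (e.symm v))) (p (e (f' (e.symm v))))
      have hR := segCross_canR (f := f') hinv' (p := fun i => p (e i)) (e.symm v)
        (p (e a)) (p (e (f' a)))
      have h4'' : SegCross (p (e (e.symm u))) (p (e (f' (e.symm u))))
          (p (e (e.symm v))) (p (e (f' (e.symm v)))) := by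
        simp only [hef', Equiv.apply_symm_apply]
        exact h4
      have step1 := hL.1 h4''
      exact hR.1 step1
    have hseg' : SegCross ((fun i => p (e i)) a) ((fun i => p (e i)) (f' a))
        ((fun i => p (e i)) b) ((fun i => p (e i)) (f' b)) := hseg
    have hab : a ≠ b := by
      intro h
      have c1 := can_cases (f := f') (e.symm u)
      have c2 := can_cases (f := f') (e.symm v)
      rw [← ha] at c1; rw [← hb] at c2
      have hej : e.symm v = e.symm u ∨ e.symm v = f' (e.symm u) := by
        rcases c1 with d1 | d1 <;> rcases c2 with d2 | d2
        · exact Or.inl (by rw [← d2, ← h, d1])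
        · right
          have h1' : e.symm u = f' (e.symm v) := by rw [← d1, h, d2]
          have h2' := congrArg f' h1'
          rw [hinv'] at h2'
          exact h2'.symm
        · exact Or.inr (by rw [← d2, ← h, d1])
        · left
          have h1' : f' (e.symm u) = f' (e.symm v) := by rw [← d1, h, d2]
          have h2' := congrArg f' h1'
          rw [hinv', hinv'] at h2'
          exact h2'.symm
      rcases hej with hh | hh
      · have : v = u := e.symm.injective hh
        rw [this] at h1; exact lt_irrefl _ h1
      · -- v's edge = u's edge
        have : f (e (e.symm u)) = e (e.symm v) := by
          rw [← hef']; exact congrArg e hh.symm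
        simp only [Equiv.apply_symm_apply] at this
        have hfu : f u = v := this
        have : f v = u := by rw [← hfu, hinv]
        rw [this] at h3
        exact absurd (lt_trans h1 h3) (lt_irrefl _)
    rcases le_or_gt a b with hle | hlt
    · rw [if_pos hle]
      exact ⟨lt_of_le_of_ne hle hab, hal, hbl, hseg'⟩
    · rw [if_neg (not_le.2 hlt)]
      exact ⟨hlt, hbl, hal, segCross_comm.1 hseg'⟩
  · -- left inverse
    rintro ⟨i, j⟩ hq
    simp only [mem_filter, mem_univ, true_and] at hq
    obtain ⟨h1, h2, h3, _⟩ := hq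
    have hri : can f' (e.symm (can f (e i))) = i := by
      rw [rt_can e hinv]; exact can_eq_self h2
    have hrj : can f' (e.symm (can f (e j))) = j := by
      rw [rt_can e hinv]; exact can_eq_self h3
    rcases le_or_gt (can f (e i)) (can f (e j)) with hle | hlt
    · dsimp only
      rw [if_pos hle]
      dsimp only
      rw [hri, hrj, if_pos h1.le]
    · dsimp only
      rw [if_neg (not_le.2 hlt)]
      dsimp only
      rw [hri, hrj, if_neg (not_le.2 h1)]
  · -- right inverse
    rintro ⟨u, v⟩ hq
    simp only [mem_filter, mem_univ, true_and] at hq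
    obtain ⟨h1, h2, h3, _⟩ := hq
    have key : ∀ x : Fin m, can f (e (can f' (e.symm x))) = can f x := by
      intro x
      have := rt_can e.symm (f := f') hinv' (x := x)
      simp only [Equiv.symm_symm] at this
      have hfx : (fun i => e ((f' (e.symm i)))) = f := by
        funext y
        simp only [hf', Equiv.apply_symm_apply]
      rw [hfx] at this
      exact this
    have hru : can f (e (can f' (e.symm u))) = u := by rw [key]; exact can_eq_self h2
    have hrv : can f (e (can f' (e.symm v))) = v := by rw [key]; exact can_eq_self h3
    rcases le_or_gt (can f' (e.symm u)) (can f' (e.symm v)) with hle | hlt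
    · dsimp only
      rw [if_pos hle]
      dsimp only
      rw [hru, hrv, if_pos h1.le]
    · dsimp only
      rw [if_neg (not_le.2 hlt)]
      dsimp only
      rw [hru, hrv, if_neg (not_le.2 h1)]

end Reindex

lemma convexCW_shift {m : ℕ} [NeZero m] {p : Fin m → ℝ × ℝ}
    (hconv : ConvexCW m p) (t : Fin m) : ConvexCW m (fun i => p (t + i)) := by
  constructor
  · intro a b hab
    have : t + a = t + b := hconv.1 hab
    exact add_left_cancel this
  · intro i j k hij hjk
    rw [← det3_def (p (t + i)) (p (t + j)) (p (t + k))]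
    have hm : 0 < m := i.pos
    have hvi : ((t + i : Fin m) : ℕ) = ((t : ℕ) + (i : ℕ)) % m := by
      rw [Fin.add_def]
    have hvj : ((t + j : Fin m) : ℕ) = ((t : ℕ) + (j : ℕ)) % m := by
      rw [Fin.add_def]
    have hvk : ((t + k : Fin m) : ℕ) = ((t : ℕ) + (k : ℕ)) % m := by
      rw [Fin.add_def]
    have hti : (t : ℕ) < m := t.isLt
    have hki : (k : ℕ) < m := k.isLt
    have hji' : (j : ℕ) < m := j.isLt
    have hii : (i : ℕ) < m := i.isLt
    have hmod : ∀ x : ℕ, x < m → x % m = x := fun x h => Nat.mod_eq_of_lt h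
    have hmod2 : ∀ x : ℕ, m ≤ x → x < 2 * m → x % m = x - m := by
      intro x h1 h2
      rw [Nat.mod_eq_sub_mod h1, Nat.mod_eq_of_lt (by omega)]
    rcases Nat.lt_or_ge ((t : ℕ) + (k : ℕ)) m with h4 | h4
    · -- none wrap
      have e1 : ((t + i : Fin m) : ℕ) = (t : ℕ) + i := by rw [hvi, hmod _ (by omega)]
      have e2 : ((t + j : Fin m) : ℕ) = (t : ℕ) + j := by rw [hvj, hmod _ (by omega)]
      have e3 : ((t + k : Fin m) : ℕ) = (t : ℕ) + k := by rw [hvk, hmod _ h4]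
      rw [det3_def]
      exact hconv.2 _ _ _ (by omega) (by omega)
    rcases Nat.lt_or_ge ((t : ℕ) + (j : ℕ)) m with h5 | h5
    · -- only k wraps : order  k' < i' < j'
      have e1 : ((t + i : Fin m) : ℕ) = (t : ℕ) + i := by rw [hvi, hmod _ (by omega)]
      have e2 : ((t + j : Fin m) : ℕ) = (t : ℕ) + j := by rw [hvj, hmod _ h5]
      have e3 : ((t + k : Fin m) : ℕ) = (t : ℕ) + k - m := by
        rw [hvk, hmod2 _ h4 (by omega)]
      rw [det3_cyc, det3_cyc, det3_def]
      exact hconv.2 _ _ _ (by omega) (by omega)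
    rcases Nat.lt_or_ge ((t : ℕ) + (i : ℕ)) m with h6 | h6
    · -- j and k wrap : order j' < k' < i'
      have e1 : ((t + i : Fin m) : ℕ) = (t : ℕ) + i := by rw [hvi, hmod _ h6]
      have e2 : ((t + j : Fin m) : ℕ) = (t : ℕ) + j - m := by
        rw [hvj, hmod2 _ h5 (by omega)]
      have e3 : ((t + k : Fin m) : ℕ) = (t : ℕ) + k - m := by
        rw [hvk, hmod2 _ h4 (by omega)]
      rw [det3_cyc, det3_def]
      exact hconv.2 _ _ _ (by omega) (by omega)
    · -- all wrap
      have e1 : ((t + i : Fin m) : ℕ) = (t : ℕ) + i - m := by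
        rw [hvi, hmod2 _ h6 (by omega)]
      have e2 : ((t + j : Fin m) : ℕ) = (t : ℕ) + j - m := by
        rw [hvj, hmod2 _ h5 (by omega)]
      have e3 : ((t + k : Fin m) : ℕ) = (t : ℕ) + k - m := by
        rw [hvk, hmod2 _ h4 (by omega)]
      rw [det3_def]
      exact hconv.2 _ _ _ (by omega) (by omega)



lemma card_int {m : ℕ} (lo hi : ℕ) (h : hi ≤ m) :
    ((univ : Finset (Fin m)).filter fun i : Fin m => lo ≤ (i : ℕ) ∧ (i : ℕ) < hi).card = hi - lo := by
  rw [← Nat.card_Ico lo hi]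
  apply Finset.card_nbij (fun i : Fin m => (i : ℕ))
  · intro i hi'
    simp only [mem_coe, mem_filter, mem_univ, true_and] at hi'
    simp [Finset.mem_Ico, hi'.1, hi'.2]
  · intro i _ j _ hij
    exact Fin.val_injective hij
  · intro b hb
    simp only [Finset.coe_Ico, Set.mem_Ico] at hb
    refine ⟨⟨b, lt_of_lt_of_le hb.2 h⟩, ?_, rfl⟩
    simp [hb.1, hb.2]

lemma card_pairs_aux (k : ℕ) :
    (((range k) ×ˢ (range k)).filter fun q => q.1 < q.2).card = k.choose 2 := by
  rw [Finset.card_filter, Finset.sum_product]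
  have hinner : ∀ a ∈ range k, (∑ b ∈ range k, if a < b then 1 else 0) = k - (a + 1) := by
    intro a _
    rw [← Finset.card_filter]
    have : (range k).filter (fun b => a < b) = Finset.Ico (a + 1) k := by
      ext b; simp [Finset.mem_Ico, Nat.succ_le_iff]; omega
    rw [this, Nat.card_Ico]
  rw [Finset.sum_congr rfl hinner]
  have h2 : ∀ a ∈ range k, k - (a + 1) = (fun j => j) (k - 1 - a) := by
    intro a _; simp only; omega
  rw [Finset.sum_congr rfl h2, Finset.sum_range_reflect (fun j => j) k,
    Finset.sum_range_id, Nat.choose_two_right]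

lemma card_pairs {m : ℕ} (lo hi : ℕ) (h : hi ≤ m) :
    ((univ : Finset (Fin m × Fin m)).filter fun q =>
      lo ≤ (q.1 : ℕ) ∧ (q.1 : ℕ) < (q.2 : ℕ) ∧ (q.2 : ℕ) < hi).card = (hi - lo).choose 2 := by
  rw [← card_pairs_aux (hi - lo)]
  apply Finset.card_nbij (fun q : Fin m × Fin m => ((q.1 : ℕ) - lo, (q.2 : ℕ) - lo))
  · intro q hq
    simp only [mem_coe, mem_filter, mem_univ, true_and] at hq
    simp only [Finset.mem_coe, Finset.mem_filter, Finset.mem_product, Finset.mem_range]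
    omega
  · intro q hq q' hq'
    simp only [Finset.coe_filter, Set.mem_setOf_eq, mem_univ, true_and] at hq hq'
    intro hval
    simp only [Prod.mk.injEq] at hval
    have h1 : (q.1 : ℕ) = q'.1 := by omega
    have h2 : (q.2 : ℕ) = q'.2 := by omega
    exact Prod.ext (Fin.val_injective h1) (Fin.val_injective h2)
  · intro q hq
    simp only [Finset.coe_filter, Set.mem_setOf_eq, Finset.mem_product, Finset.mem_range,
      Set.mem_image, mem_coe, mem_filter, mem_univ, true_and] at hq ⊢
    refine ⟨(⟨q.1 + lo, by omega⟩, ⟨q.2 + lo, by omega⟩), ⟨?_, ?_, ?_⟩, ?_⟩ <;>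
      simp <;> omega

def c4 (m a b a2 : ℕ) : Fin m → Bool := fun j =>
  if (j : ℕ) < a then true
  else if (j : ℕ) < a + b then false
  else if (j : ℕ) < a + b + a2 then true
  else false

lemma c4_true {m a b a2 : ℕ} (j : Fin m) :
    c4 m a b a2 j = true ↔ ((j : ℕ) < a ∨ (a + b ≤ (j : ℕ) ∧ (j : ℕ) < a + b + a2)) := by
  unfold c4
  split_ifs with h1 h2 h3 <;> simp <;> omega

section Upper
variable {m : ℕ} (a b a2 b2 : ℕ) {f : Fin m → Fin m}

lemma opp_color (hcol : ∀ i, c4 m a b a2 (f i) ≠ c4 m a b a2 i) : ∀ i : Fin m,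
    ((i : ℕ) < a ∨ (a + b ≤ (i : ℕ) ∧ (i : ℕ) < a + b + a2)) ↔
      ¬(((f i : ℕ) < a) ∨ (a + b ≤ (f i : ℕ) ∧ (f i : ℕ) < a + b + a2)) := by
  intro i
  have := hcol i
  rw [← c4_true (a := a) (b := b) (a2 := a2), ← c4_true (a := a) (b := b) (a2 := a2)]
  rcases Bool.eq_false_or_eq_true (c4 m a b a2 i) with h | h <;>
    rcases Bool.eq_false_or_eq_true (c4 m a b a2 (f i)) with h' | h' <;>
      simp [h, h'] at this ⊢

lemma upper_bound (hm : m = a + b + a2 + b2) (hinv : Function.Involutive f)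
    (hcol : ∀ i, c4 m a b a2 (f i) ≠ c4 m a b a2 i) :
    ∃ x z y w : ℕ, x + y = a ∧ z + w = a2 ∧ x + z = b ∧
      Dcount m f ≤ a.choose 2 + a2.choose 2 + x * z + y * w := by
  classical
  set X : Finset (Fin m) := univ.filter (fun i => (i : ℕ) < a ∧ (f i : ℕ) < a + b) with hX
  set Y : Finset (Fin m) := univ.filter (fun i => (i : ℕ) < a ∧ a + b ≤ (f i : ℕ)) with hY
  set Z : Finset (Fin m) := univ.filter
    (fun j => a ≤ (j : ℕ) ∧ (j : ℕ) < a + b ∧ a + b ≤ (f j : ℕ)) with hZ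
  set W : Finset (Fin m) := univ.filter
    (fun s => a + b ≤ (s : ℕ) ∧ (s : ℕ) < a + b + a2 ∧ a + b + a2 ≤ (f s : ℕ)) with hW
  have hopp := opp_color a b a2 hcol
  refine ⟨X.card, Z.card, Y.card, W.card, ?_, ?_, ?_, ?_⟩
  · -- x + y = a
    have hdisj : Disjoint X Y := by
      rw [Finset.disjoint_left]
      intro i h1 h2
      simp only [hX, hY, mem_filter, mem_univ, true_and] at h1 h2
      omega
    have hunion : X ∪ Y = univ.filter (fun i : Fin m => (i : ℕ) < a) := by
      ext i
      simp only [hX, hY, Finset.mem_union, mem_filter, mem_univ, true_and]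
      omega
    have hcu := Finset.card_union_of_disjoint hdisj
    rw [hunion] at hcu
    have hcnt : (univ.filter (fun i : Fin m => (i : ℕ) < a)).card = a := by
      have he : (univ.filter (fun i : Fin m => (i : ℕ) < a)) =
          (univ.filter (fun i : Fin m => 0 ≤ (i : ℕ) ∧ (i : ℕ) < a)) := by
        ext i; simp
      rw [he, card_int (m := m) 0 a (by omega)]
      omega
    omega
  · -- z + w = a2
    have hbij : Z.card = (univ.filter (fun s : Fin m =>
        a + b ≤ (s : ℕ) ∧ (s : ℕ) < a + b + a2 ∧ (f s : ℕ) < a + b + a2)).card := by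
      apply Finset.card_nbij (fun j => f j)
      · intro j hj
        simp only [hZ, mem_coe, mem_filter, mem_univ, true_and] at hj
        simp only [mem_coe, mem_filter, mem_univ, true_and]
        have hblue : ¬((j:ℕ) < a ∨ (a + b ≤ (j:ℕ) ∧ (j:ℕ) < a + b + a2)) := by omega
        have hred : ((f j : ℕ) < a ∨ (a + b ≤ (f j : ℕ) ∧ (f j : ℕ) < a + b + a2)) := by
          by_contra hc
          exact hblue ((hopp j).2 hc)
        rw [hinv j]
        omega
      · intro u _ v _ huv
        exact hinv.injective huv
      · intro s hs
        simp only [Finset.coe_filter, Set.mem_setOf_eq, mem_univ, true_and] at hs ⊢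
        refine ⟨f s, ?_, hinv s⟩
        simp only [hZ, Set.mem_setOf_eq, mem_coe, mem_filter, mem_univ, true_and]
        have hred : ((s:ℕ) < a ∨ (a + b ≤ (s:ℕ) ∧ (s:ℕ) < a + b + a2)) := by omega
        have hblue := (hopp s).1 hred
        rw [hinv s]
        omega
    have hdisj : Disjoint (univ.filter (fun s : Fin m =>
        a + b ≤ (s : ℕ) ∧ (s : ℕ) < a + b + a2 ∧ (f s : ℕ) < a + b + a2)) W := by
      rw [Finset.disjoint_left]
      intro s h1 h2
      simp only [hW, mem_filter, mem_univ, true_and] at h1 h2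
      omega
    have hunion : (univ.filter (fun s : Fin m =>
        a + b ≤ (s : ℕ) ∧ (s : ℕ) < a + b + a2 ∧ (f s : ℕ) < a + b + a2)) ∪ W =
        univ.filter (fun s : Fin m => a + b ≤ (s : ℕ) ∧ (s : ℕ) < a + b + a2) := by
      ext s
      have hsm : (s : ℕ) < m := s.isLt
      simp only [hW, Finset.mem_union, mem_filter, mem_univ, true_and]
      omega
    have hcu := Finset.card_union_of_disjoint hdisj
    rw [hunion, card_int (m := m) (a+b) (a+b+a2) (by omega)] at hcu
    omega
  · -- x + z = b
    have hbij : X.card = (univ.filter (fun j : Fin m =>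
        a ≤ (j : ℕ) ∧ (j : ℕ) < a + b ∧ (f j : ℕ) < a + b)).card := by
      apply Finset.card_nbij (fun i => f i)
      · intro i hi
        simp only [hX, mem_coe, mem_filter, mem_univ, true_and] at hi
        simp only [mem_coe, mem_filter, mem_univ, true_and]
        have hblue := (hopp i).1 (by omega)
        rw [hinv i]
        omega
      · intro u _ v _ huv
        exact hinv.injective huv
      · intro j hj
        simp only [Finset.coe_filter, Set.mem_setOf_eq, mem_univ, true_and] at hj ⊢
        refine ⟨f j, ?_, hinv j⟩
        simp only [hX, Set.mem_setOf_eq, mem_coe, mem_filter, mem_univ, true_and]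
        have hblue : ¬((j:ℕ) < a ∨ (a + b ≤ (j:ℕ) ∧ (j:ℕ) < a + b + a2)) := by omega
        have hred : ((f j : ℕ) < a ∨ (a + b ≤ (f j : ℕ) ∧ (f j : ℕ) < a + b + a2)) := by
          by_contra hc
          exact hblue ((hopp j).2 hc)
        rw [hinv j]
        omega
    have hdisj : Disjoint (univ.filter (fun j : Fin m =>
        a ≤ (j : ℕ) ∧ (j : ℕ) < a + b ∧ (f j : ℕ) < a + b)) Z := by
      rw [Finset.disjoint_left]
      intro s h1 h2
      simp only [hZ, mem_filter, mem_univ, true_and] at h1 h2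
      omega
    have hunion : (univ.filter (fun j : Fin m =>
        a ≤ (j : ℕ) ∧ (j : ℕ) < a + b ∧ (f j : ℕ) < a + b)) ∪ Z =
        univ.filter (fun j : Fin m => a ≤ (j : ℕ) ∧ (j : ℕ) < a + b) := by
      ext j
      have hblue : ¬((j:ℕ) < a ∨ (a + b ≤ (j:ℕ) ∧ (j:ℕ) < a + b + a2)) → True := fun _ => trivial
      simp only [hZ, Finset.mem_union, mem_filter, mem_univ, true_and]
      constructor
      · rintro (h | h) <;> exact ⟨h.1, h.2.1⟩
      · rintro ⟨h1, h2⟩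
        have hblue2 : ¬((j:ℕ) < a ∨ (a + b ≤ (j:ℕ) ∧ (j:ℕ) < a + b + a2)) := by omega
        have hred : ((f j : ℕ) < a ∨ (a + b ≤ (f j : ℕ) ∧ (f j : ℕ) < a + b + a2)) := by
          by_contra hc
          exact hblue2 ((hopp j).2 hc)
        rcases Nat.lt_or_ge (f j : ℕ) (a + b) with h' | h'
        · exact Or.inl ⟨h1, h2, h'⟩
        · exact Or.inr ⟨h1, h2, h'⟩
    have hcu := Finset.card_union_of_disjoint hdisj
    rw [hunion, card_int (m := m) a (a+b) (by omega)] at hcu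
    omega
  · -- main bound
    set F := (univ : Finset (Fin m × Fin m)).filter (fun q =>
      q.1 < q.2 ∧ q.2 < f q.1 ∧ f q.1 < f q.2) with hF
    have hFmem : ∀ q : Fin m × Fin m, q ∈ F →
        (q.1 : ℕ) < (q.2 : ℕ) ∧ (q.2 : ℕ) < (f q.1 : ℕ) ∧ (f q.1 : ℕ) < (f q.2 : ℕ) := by
      intro q hq
      simp only [hF, mem_filter, mem_univ, true_and] at hq
      exact ⟨hq.1, hq.2.1, hq.2.2⟩
    set FA := F.filter (fun q => (q.2 : ℕ) < a) with hFA
    set FC := F.filter (fun q => (q.1 : ℕ) < a ∧ a ≤ (q.2 : ℕ) ∧ (q.2 : ℕ) < a + b) with hFC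
    set FD := F.filter (fun q => (q.1 : ℕ) < a ∧ a + b ≤ (q.2 : ℕ)) with hFD
    set FB := F.filter (fun q => a ≤ (q.1 : ℕ)) with hFB
    have hcover : F = FA ∪ FC ∪ FD ∪ FB := by
      ext q
      simp only [hFA, hFC, hFD, hFB, Finset.mem_union, mem_filter]
      constructor
      · intro hq
        have h1 := (hFmem q hq).1
        rcases Nat.lt_or_ge (q.1 : ℕ) a with h | h
        · rcases Nat.lt_or_ge (q.2 : ℕ) a with h' | h'
          · exact Or.inl (Or.inl (Or.inl ⟨hq, h'⟩))
          · rcases Nat.lt_or_ge (q.2 : ℕ) (a + b) with h'' | h''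
            · exact Or.inl (Or.inl (Or.inr ⟨hq, h, h', h''⟩))
            · exact Or.inl (Or.inr ⟨hq, h, h''⟩)
        · exact Or.inr ⟨hq, h⟩
      · rintro (((⟨hq, _⟩ | ⟨hq, _⟩) | ⟨hq, _⟩) | ⟨hq, _⟩) <;> exact hq
    have hd1 : Disjoint (FA ∪ FC ∪ FD) FB := by
      rw [Finset.disjoint_left]
      intro q hq1 hq2
      have h1 := (hFmem q (by simp only [hFB, mem_filter] at hq2; exact hq2.1)).1
      simp only [hFA, hFC, hFD, hFB, Finset.mem_union, mem_filter] at hq1 hq2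
      omega
    have hd2 : Disjoint (FA ∪ FC) FD := by
      rw [Finset.disjoint_left]
      intro q hq1 hq2
      simp only [hFA, hFC, hFD, Finset.mem_union, mem_filter] at hq1 hq2
      omega
    have hd3 : Disjoint FA FC := by
      rw [Finset.disjoint_left]
      intro q hq1 hq2
      simp only [hFA, hFC, mem_filter] at hq1 hq2
      omega
    have hcard : F.card = FA.card + FC.card + FD.card + FB.card := by
      rw [hcover, Finset.card_union_of_disjoint hd1, Finset.card_union_of_disjoint hd2,
        Finset.card_union_of_disjoint hd3]
    have hAbound : FA.card ≤ a.choose 2 := by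
      have hsub : FA ⊆ (univ : Finset (Fin m × Fin m)).filter (fun q =>
          0 ≤ (q.1 : ℕ) ∧ (q.1 : ℕ) < (q.2 : ℕ) ∧ (q.2 : ℕ) < a) := by
        intro q hq
        simp only [hFA, mem_filter] at hq
        have h1 := (hFmem q hq.1).1
        simp only [mem_filter, mem_univ, true_and]
        exact ⟨by omega, h1, hq.2⟩
      calc FA.card ≤ _ := Finset.card_le_card hsub
        _ = (a - 0).choose 2 := card_pairs (m := m) 0 a (by omega)
        _ = a.choose 2 := by rw [Nat.sub_zero]
    have hCbound : FC.card ≤ X.card * Z.card := by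
      have hsub : FC ⊆ X ×ˢ Z := by
        intro q hq
        simp only [hFC, mem_filter] at hq
        obtain ⟨hqF, h1, h2, h3⟩ := hq
        obtain ⟨hq1, hq2, hq3⟩ := hFmem q hqF
        have hfq1blue : ¬((f q.1 : ℕ) < a ∨ (a + b ≤ (f q.1 : ℕ) ∧ (f q.1 : ℕ) < a + b + a2)) :=
          (hopp q.1).1 (by omega)
        have hfq2red : ((f q.2 : ℕ) < a ∨ (a + b ≤ (f q.2 : ℕ) ∧ (f q.2 : ℕ) < a + b + a2)) := by
          by_contra hc
          exact (by omega : ¬((q.2:ℕ) < a ∨ (a + b ≤ (q.2:ℕ) ∧ (q.2:ℕ) < a + b + a2)))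
            ((hopp q.2).2 hc)
        simp only [Finset.mem_product, hX, hZ, mem_filter, mem_univ, true_and]
        omega
      calc FC.card ≤ (X ×ˢ Z).card := Finset.card_le_card hsub
        _ = X.card * Z.card := Finset.card_product X Z
    have hDbound : FD.card ≤ Y.card * W.card := by
      have hsub : FD ⊆ Y ×ˢ W := by
        intro q hq
        simp only [hFD, mem_filter] at hq
        obtain ⟨hqF, h1, h2⟩ := hq
        obtain ⟨hq1, hq2, hq3⟩ := hFmem q hqF
        have hfq1blue : ¬((f q.1 : ℕ) < a ∨ (a + b ≤ (f q.1 : ℕ) ∧ (f q.1 : ℕ) < a + b + a2)) :=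
          (hopp q.1).1 (by omega)
        have hq2red : ((q.2 : ℕ) < a ∨ (a + b ≤ (q.2 : ℕ) ∧ (q.2 : ℕ) < a + b + a2)) := by
          by_contra hc
          have hfq2red : ((f q.2 : ℕ) < a ∨ (a + b ≤ (f q.2:ℕ) ∧ (f q.2:ℕ) < a + b + a2)) := by
            by_contra hc2
            exact hc ((hopp q.2).2 hc2)
          omega
        have hfq2blue : ¬((f q.2 : ℕ) < a ∨ (a + b ≤ (f q.2 : ℕ) ∧ (f q.2 : ℕ) < a + b + a2)) :=
          (hopp q.2).1 hq2red
        simp only [Finset.mem_product, hY, hW, mem_filter, mem_univ, true_and]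
        omega
      calc FD.card ≤ (Y ×ˢ W).card := Finset.card_le_card hsub
        _ = Y.card * W.card := Finset.card_product Y W
    have hBbound : FB.card ≤ a2.choose 2 := by
      have htarget : ((univ : Finset (Fin m × Fin m)).filter (fun q =>
          (a + b) ≤ (q.1 : ℕ) ∧ (q.1 : ℕ) < (q.2 : ℕ) ∧ (q.2 : ℕ) < a + b + a2)).card
          = a2.choose 2 := by
        rw [card_pairs (m := m) (a+b) (a+b+a2) (by omega)]
        congr 1
        omega
      rw [← htarget]
      set r : Fin m → Fin m := fun i => if (i : ℕ) < a + b then f i else i with hr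
      have hfacts : ∀ q : Fin m × Fin m, q ∈ FB →
          (a + b ≤ ((r q.1) : ℕ) ∧ ((r q.1) : ℕ) < a + b + a2) ∧
          (a + b ≤ ((r q.2) : ℕ) ∧ ((r q.2) : ℕ) < a + b + a2) ∧
          can f (r q.1) = q.1 ∧ can f (r q.2) = q.2 := by
        intro q hq
        simp only [hFB, mem_filter] at hq
        obtain ⟨hqF, hge⟩ := hq
        obtain ⟨hq1, hq2, hq3⟩ := hFmem q hqF
        have hlt1 : q.1 < f q.1 := by
          rw [Fin.lt_def]; omega
        have hlt2 : q.2 < f q.2 := by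
          rw [Fin.lt_def]; omega
        have hc1 : can f (r q.1) = q.1 := by
          simp only [hr]
          split_ifs with h
          · rw [can_f hinv, can_eq_self hlt1]
          · exact can_eq_self hlt1
        have hc2 : can f (r q.2) = q.2 := by
          simp only [hr]
          split_ifs with h
          · rw [can_f hinv, can_eq_self hlt2]
          · exact can_eq_self hlt2
        have hrange1 : a + b ≤ ((r q.1) : ℕ) ∧ ((r q.1) : ℕ) < a + b + a2 := by
          simp only [hr]
          split_ifs with h
          · -- q.1 ∈ [a, a+b) blue, f q.1 red
            have hblue : ¬((q.1:ℕ) < a ∨ (a + b ≤ (q.1:ℕ) ∧ (q.1:ℕ) < a + b + a2)) := by omega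
            have hred : ((f q.1 : ℕ) < a ∨ (a + b ≤ (f q.1:ℕ) ∧ (f q.1:ℕ) < a + b + a2)) := by
              by_contra hc
              exact hblue ((hopp q.1).2 hc)
            omega
          · -- q.1 ≥ a+b; if blue (≥ a+b+a2) then f q.1 red < a+b+a2 < q.1 contradiction
            by_contra hc
            have hblue : ¬((q.1:ℕ) < a ∨ (a + b ≤ (q.1:ℕ) ∧ (q.1:ℕ) < a + b + a2)) := by omega
            have hred : ((f q.1 : ℕ) < a ∨ (a + b ≤ (f q.1:ℕ) ∧ (f q.1:ℕ) < a + b + a2)) := by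
              by_contra hc2
              exact hblue ((hopp q.1).2 hc2)
            omega
        have hrange2 : a + b ≤ ((r q.2) : ℕ) ∧ ((r q.2) : ℕ) < a + b + a2 := by
          simp only [hr]
          split_ifs with h
          · have hblue : ¬((q.2:ℕ) < a ∨ (a + b ≤ (q.2:ℕ) ∧ (q.2:ℕ) < a + b + a2)) := by omega
            have hred : ((f q.2 : ℕ) < a ∨ (a + b ≤ (f q.2:ℕ) ∧ (f q.2:ℕ) < a + b + a2)) := by
              by_contra hc
              exact hblue ((hopp q.2).2 hc)
            omega
          · by_contra hc
            have hblue : ¬((q.2:ℕ) < a ∨ (a + b ≤ (q.2:ℕ) ∧ (q.2:ℕ) < a + b + a2)) := by omega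
            have hred : ((f q.2 : ℕ) < a ∨ (a + b ≤ (f q.2:ℕ) ∧ (f q.2:ℕ) < a + b + a2)) := by
              by_contra hc2
              exact hblue ((hopp q.2).2 hc2)
            omega
        exact ⟨hrange1, hrange2, hc1, hc2⟩
      apply Finset.card_le_card_of_injOn
        (fun q => if r q.1 ≤ r q.2 then (r q.1, r q.2) else (r q.2, r q.1))
      · intro q hq
        obtain ⟨hr1, hr2, hc1, hc2⟩ := hfacts q hq
        have hne : r q.1 ≠ r q.2 := by
          intro h
          have : q.1 = q.2 := by rw [← hc1, ← hc2, h]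
          have hq1 := (hFmem q (by simp only [hFB, mem_coe, mem_filter] at hq; exact hq.1)).1
          rw [this] at hq1
          exact lt_irrefl _ hq1
        simp only [mem_coe, mem_filter, mem_univ, true_and]
        split_ifs with hle
        · have hlt : ((r q.1) : ℕ) < ((r q.2) : ℕ) := by
            have h1 : ((r q.1) : ℕ) ≤ ((r q.2) : ℕ) := hle
            have h2 : ((r q.1) : ℕ) ≠ ((r q.2) : ℕ) := fun h => hne (Fin.val_injective h)
            omega
          exact ⟨hr1.1, hlt, hr2.2⟩
        · have hlt : ((r q.2) : ℕ) < ((r q.1) : ℕ) := by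
            have h1 : ¬ ((r q.1) : ℕ) ≤ ((r q.2) : ℕ) := hle
            omega
          exact ⟨hr2.1, hlt, hr1.2⟩
      · intro q hq q' hq' heq
        have hqFB : q ∈ FB := by simpa using hq
        have hqFB' : q' ∈ FB := by simpa using hq'
        obtain ⟨_, _, hc1, hc2⟩ := hfacts q hqFB
        obtain ⟨_, _, hc1', hc2'⟩ := hfacts q' hqFB'
        have hqlt := (hFmem q (by rw [hFB] at hqFB; exact (Finset.mem_filter.1 hqFB).1)).1
        have hqlt' := (hFmem q' (by rw [hFB] at hqFB'; exact (Finset.mem_filter.1 hqFB').1)).1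
        dsimp only at heq
        split_ifs at heq with h1 h2 h2 <;> simp only [Prod.mk.injEq] at heq
        · have e1 : q.1 = q'.1 := by rw [← hc1, ← hc1', heq.1]
          have e2 : q.2 = q'.2 := by rw [← hc2, ← hc2', heq.2]
          exact Prod.ext e1 e2
        · have e1 : q.1 = q'.2 := by rw [← hc1, ← hc2', heq.1]
          have e2 : q.2 = q'.1 := by rw [← hc2, ← hc1', heq.2]
          rw [e1] at hqlt; rw [e2] at hqlt
          omega
        · have e1 : q.2 = q'.1 := by rw [← hc2, ← hc1', ← heq.1]
          have e2 : q.1 = q'.2 := by rw [← hc1, ← hc2', ← heq.2]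
          rw [e1] at hqlt; rw [e2] at hqlt
          omega
        · have e1 : q.2 = q'.2 := by rw [← hc2, ← hc2', heq.1]
          have e2 : q.1 = q'.1 := by rw [← hc1, ← hc1', heq.2]
          exact Prod.ext e2 e1
    calc Dcount m f = F.card := by rw [hF]; rfl
      _ = FA.card + FC.card + FD.card + FB.card := hcard
      _ ≤ a.choose 2 + X.card * Z.card + Y.card * W.card + a2.choose 2 := by
          exact Nat.add_le_add (Nat.add_le_add (Nat.add_le_add hAbound hCbound) hDbound) hBbound
      _ = a.choose 2 + a2.choose 2 + X.card * Z.card + Y.card * W.card := by ring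

end Upper


-- assume from previous sections:

lemma two_mul_choose_two (k : ℕ) : 2 * k.choose 2 = k * (k - 1) := by
  induction k with
  | zero => simp
  | succ k' ih =>
    rw [Nat.choose_succ_succ, Nat.choose_one_right, Nat.mul_add, ih, Nat.add_sub_cancel]
    rcases k' with _ | k''
    · simp
    · rw [Nat.add_sub_cancel]
      ring

lemma choose_two_add (z w : ℕ) : z.choose 2 + w.choose 2 + z * w = (z + w).choose 2 := by
  rcases z with _ | z'
  · simp [Nat.choose]
  rcases w with _ | w'
  · simp [Nat.choose]
  apply Nat.eq_of_mul_eq_mul_left (show 0 < 2 by norm_num)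
  rw [Nat.mul_add, Nat.mul_add, two_mul_choose_two, two_mul_choose_two, two_mul_choose_two]
  simp only [Nat.add_sub_cancel]
  have h3 : z' + 1 + (w' + 1) - 1 = z' + w' + 1 := by omega
  rw [h3]
  ring

/-- the optimal matching as a function on ℕ -/
def gfun (a b a2 x z y w : ℕ) (i : ℕ) : ℕ :=
  if i < x then a + z + i
  else if i < a then a + b + a2 + (i - x)
  else if i < a + z then a + b + w + (i - a)
  else if i < a + b then i - (a + z)
  else if i < a + b + w then a + b + a2 + y + (i - (a + b))
  else if i < a + b + a2 then a + (i - (a + b + w))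
  else if i < a + b + a2 + y then x + (i - (a + b + a2))
  else a + b + (i - (a + b + a2 + y))

section Constr

variable {m : ℕ} (a b a2 b2 x z y w : ℕ)
  (hm : m = a + b + a2 + b2) (hxy : x + y = a) (hzw : z + w = a2)
  (hxz : x + z = b) (hyw : y + w = b2)

include hm hxy hzw hxz hyw in
lemma gfun_lt (i : ℕ) (hi : i < m) : gfun a b a2 x z y w i < m := by
  unfold gfun
  split_ifs <;> omega

include hm hxy hzw hxz hyw in
lemma gfun_char (i : ℕ) (hi : i < m) :
    (i < x ∧ gfun a b a2 x z y w i = a + z + i) ∨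
    (x ≤ i ∧ i < a ∧ gfun a b a2 x z y w i = a + b + a2 + (i - x)) ∨
    (a ≤ i ∧ i < a + z ∧ gfun a b a2 x z y w i = a + b + w + (i - a)) ∨
    (a + z ≤ i ∧ i < a + b ∧ gfun a b a2 x z y w i = i - (a + z)) ∨
    (a + b ≤ i ∧ i < a + b + w ∧ gfun a b a2 x z y w i = a + b + a2 + y + (i - (a + b))) ∨
    (a + b + w ≤ i ∧ i < a + b + a2 ∧ gfun a b a2 x z y w i = a + (i - (a + b + w))) ∨
    (a + b + a2 ≤ i ∧ i < a + b + a2 + y ∧ gfun a b a2 x z y w i = x + (i - (a + b + a2))) ∨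
    (a + b + a2 + y ≤ i ∧ i < m ∧ gfun a b a2 x z y w i = a + b + (i - (a + b + a2 + y))) := by
  unfold gfun
  split_ifs <;> omega

include hm hxy hzw hxz hyw in
lemma gfun_invol (i : ℕ) (hi : i < m) :
    gfun a b a2 x z y w (gfun a b a2 x z y w i) = i := by
  have hc1 := gfun_char a b a2 b2 x z y w hm hxy hzw hxz hyw i hi
  have hl := gfun_lt a b a2 b2 x z y w hm hxy hzw hxz hyw i hi
  have hc2 := gfun_char a b a2 b2 x z y w hm hxy hzw hxz hyw
    (gfun a b a2 x z y w i) hl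
  omega

include hm hxy hzw hxz hyw in
lemma construction :
    ∃ f : Fin m → Fin m, Function.Involutive f ∧ (∀ i, f i ≠ i) ∧
      (∀ i, c4 m a b a2 (f i) ≠ c4 m a b a2 i) ∧
      Dcount m f = a.choose 2 + a2.choose 2 + x * z + y * w := by
  classical
  set f : Fin m → Fin m := fun i => ⟨gfun a b a2 x z y w (i : ℕ),
    gfun_lt a b a2 b2 x z y w hm hxy hzw hxz hyw (i : ℕ) i.isLt⟩ with hf
  have hval : ∀ i : Fin m, ((f i) : ℕ) = gfun a b a2 x z y w (i : ℕ) := fun i => rfl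
  have hinv : Function.Involutive f := by
    intro i
    apply Fin.val_injective
    rw [hval, hval]
    exact gfun_invol a b a2 b2 x z y w hm hxy hzw hxz hyw (i : ℕ) i.isLt
  have hfix : ∀ i : Fin m, f i ≠ i := by
    intro i h
    have hvv : gfun a b a2 x z y w (i : ℕ) = (i : ℕ) := by
      rw [← hval, h]
    have him := i.isLt
    have hc1 := gfun_char a b a2 b2 x z y w hm hxy hzw hxz hyw (i : ℕ) him
    omega
  have hcol : ∀ i : Fin m, c4 m a b a2 (f i) ≠ c4 m a b a2 i := by
    intro i
    have hiff : (c4 m a b a2 (f i) = true) ↔ ¬ (c4 m a b a2 i = true) := by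
      rw [c4_true, c4_true, hval]
      have him := i.isLt
      have hc1 := gfun_char a b a2 b2 x z y w hm hxy hzw hxz hyw (i : ℕ) him
      omega
    intro hc
    rw [hc] at hiff
    tauto
  refine ⟨f, hinv, hfix, hcol, ?_⟩
  -- the crossing count
  set GA := (univ : Finset (Fin m × Fin m)).filter (fun q =>
    0 ≤ (q.1 : ℕ) ∧ (q.1 : ℕ) < (q.2 : ℕ) ∧ (q.2 : ℕ) < a) with hGA
  set GC := (univ : Finset (Fin m × Fin m)).filter (fun q =>
    (0 ≤ (q.1 : ℕ) ∧ (q.1 : ℕ) < x) ∧ (a ≤ (q.2 : ℕ) ∧ (q.2 : ℕ) < a + z)) with hGC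
  set GD := (univ : Finset (Fin m × Fin m)).filter (fun q =>
    (x ≤ (q.1 : ℕ) ∧ (q.1 : ℕ) < a) ∧ (a + b ≤ (q.2 : ℕ) ∧ (q.2 : ℕ) < a + b + w)) with hGD
  set GB1 := (univ : Finset (Fin m × Fin m)).filter (fun q =>
    a ≤ (q.1 : ℕ) ∧ (q.1 : ℕ) < (q.2 : ℕ) ∧ (q.2 : ℕ) < a + z) with hGB1
  set GB2 := (univ : Finset (Fin m × Fin m)).filter (fun q =>
    (a ≤ (q.1 : ℕ) ∧ (q.1 : ℕ) < a + z) ∧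
      (a + b ≤ (q.2 : ℕ) ∧ (q.2 : ℕ) < a + b + w)) with hGB2
  set GB3 := (univ : Finset (Fin m × Fin m)).filter (fun q =>
    a + b ≤ (q.1 : ℕ) ∧ (q.1 : ℕ) < (q.2 : ℕ) ∧ (q.2 : ℕ) < a + b + w) with hGB3
  have hcover : (univ : Finset (Fin m × Fin m)).filter (fun q =>
      q.1 < q.2 ∧ q.2 < f q.1 ∧ f q.1 < f q.2) =
      GA ∪ GC ∪ GD ∪ GB1 ∪ GB2 ∪ GB3 := by
    ext q
    have h1m := q.1.isLt
    have h2m := q.2.isLt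
    simp only [hGA, hGC, hGD, hGB1, hGB2, hGB3, Finset.mem_union, mem_filter, mem_univ,
      true_and, Fin.lt_def, hval]
    have hc1 := gfun_char a b a2 b2 x z y w hm hxy hzw hxz hyw ((q.1 : Fin m) : ℕ) h1m
    have hc2 := gfun_char a b a2 b2 x z y w hm hxy hzw hxz hyw ((q.2 : Fin m) : ℕ) h2m
    omega
  have hd5 : Disjoint (GA ∪ GC ∪ GD ∪ GB1 ∪ GB2) GB3 := by
    rw [Finset.disjoint_left]
    intro q hq1 hq2
    simp only [hGA, hGC, hGD, hGB1, hGB2, hGB3, Finset.mem_union, mem_filter, mem_univ,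
      true_and] at hq1 hq2
    omega
  have hd4 : Disjoint (GA ∪ GC ∪ GD ∪ GB1) GB2 := by
    rw [Finset.disjoint_left]
    intro q hq1 hq2
    simp only [hGA, hGC, hGD, hGB1, hGB2, Finset.mem_union, mem_filter, mem_univ,
      true_and] at hq1 hq2
    omega
  have hd3 : Disjoint (GA ∪ GC ∪ GD) GB1 := by
    rw [Finset.disjoint_left]
    intro q hq1 hq2
    simp only [hGA, hGC, hGD, hGB1, Finset.mem_union, mem_filter, mem_univ,
      true_and] at hq1 hq2
    omega
  have hd2 : Disjoint (GA ∪ GC) GD := by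
    rw [Finset.disjoint_left]
    intro q hq1 hq2
    simp only [hGA, hGC, hGD, Finset.mem_union, mem_filter, mem_univ, true_and] at hq1 hq2
    omega
  have hd1 : Disjoint GA GC := by
    rw [Finset.disjoint_left]
    intro q hq1 hq2
    simp only [hGA, hGC, mem_filter, mem_univ, true_and] at hq1 hq2
    omega
  have hcardGA : GA.card = a.choose 2 := by
    rw [hGA, card_pairs 0 a (by omega), Nat.sub_zero]
  have hcardGB1 : GB1.card = z.choose 2 := by
    rw [hGB1]
    rw [card_pairs a (a + z) (by omega)]
    congr 1
    omega
  have hcardGB3 : GB3.card = w.choose 2 := by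
    rw [hGB3, card_pairs (a + b) (a + b + w) (by omega)]
    congr 1
    omega
  have hcardGC : GC.card = x * z := by
    have hp : GC = (univ.filter (fun i : Fin m => 0 ≤ (i : ℕ) ∧ (i : ℕ) < x)) ×ˢ
        (univ.filter (fun j : Fin m => a ≤ (j : ℕ) ∧ (j : ℕ) < a + z)) := by
      ext q
      simp only [hGC, mem_filter, mem_univ, true_and, Finset.mem_product]
    rw [hp, Finset.card_product, card_int 0 x (by omega), card_int a (a + z) (by omega)]
    all_goals congr 1 <;> omega
  have hcardGD : GD.card = y * w := by
    have hp : GD = (univ.filter (fun i : Fin m => x ≤ (i : ℕ) ∧ (i : ℕ) < a)) ×ˢ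
        (univ.filter (fun j : Fin m => a + b ≤ (j : ℕ) ∧ (j : ℕ) < a + b + w)) := by
      ext q
      simp only [hGD, mem_filter, mem_univ, true_and, Finset.mem_product]
    rw [hp, Finset.card_product, card_int x a (by omega),
      card_int (a + b) (a + b + w) (by omega)]
    all_goals congr 1 <;> omega
  have hcardGB2 : GB2.card = z * w := by
    have hp : GB2 = (univ.filter (fun i : Fin m => a ≤ (i : ℕ) ∧ (i : ℕ) < a + z)) ×ˢ
        (univ.filter (fun j : Fin m => a + b ≤ (j : ℕ) ∧ (j : ℕ) < a + b + w)) := by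
      ext q
      simp only [hGB2, mem_filter, mem_univ, true_and, Finset.mem_product]
    rw [hp, Finset.card_product, card_int a (a + z) (by omega),
      card_int (a + b) (a + b + w) (by omega)]
    all_goals congr 1 <;> omega
  have : Dcount m f = GA.card + GC.card + GD.card + GB1.card + GB2.card + GB3.card := by
    unfold Dcount
    rw [hcover, Finset.card_union_of_disjoint hd5, Finset.card_union_of_disjoint hd4,
      Finset.card_union_of_disjoint hd3, Finset.card_union_of_disjoint hd2,
      Finset.card_union_of_disjoint hd1]
  rw [this, hcardGA, hcardGC, hcardGD, hcardGB1, hcardGB2, hcardGB3]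
  have hchoose := choose_two_add z w
  rw [hzw] at hchoose
  omega

end Constr


lemma consec_int (t : ℤ) : 0 ≤ t * (t - 1) := by
  rcases le_or_gt t 0 with h | h
  · have h2 := mul_nonneg (show (0:ℤ) ≤ -t by omega) (show (0:ℤ) ≤ 1 - t by omega)
    nlinarith
  · exact mul_nonneg (by omega) (by omega)

lemma cast_help {t : ℤ} (h : 0 ≤ t) : (0:ℚ) ≤ (t:ℚ) := by exact_mod_cast h

lemma consec_qm1 (x k : ℕ) : (0:ℚ) ≤ (2*(x:ℚ) - k - 1) * (2*(x:ℚ) - k - 2) := by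
  have h0 := cast_help (consec_int (2*(x:ℤ) - k - 1))
  have hc : (((2*(x:ℤ) - k - 1) * ((2*(x:ℤ) - k - 1) - 1) : ℤ) : ℚ) =
      (2*(x:ℚ) - k - 1) * (2*(x:ℚ) - k - 2) := by push_cast; ring
  rwa [hc] at h0

lemma consec_q0 (x k : ℕ) : (0:ℚ) ≤ (2*(x:ℚ) - k) * (2*(x:ℚ) - k - 1) := by
  have h0 := cast_help (consec_int (2*(x:ℤ) - k))
  have hc : (((2*(x:ℤ) - k) * ((2*(x:ℤ) - k) - 1) : ℤ) : ℚ) =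
      (2*(x:ℚ) - k) * (2*(x:ℚ) - k - 1) := by push_cast; ring
  rwa [hc] at h0

lemma consec_q1 (x k : ℕ) : (0:ℚ) ≤ (2*(x:ℚ) - k + 1) * (2*(x:ℚ) - k) := by
  have h0 := cast_help (consec_int (2*(x:ℤ) - k + 1))
  have hc : (((2*(x:ℤ) - k + 1) * ((2*(x:ℤ) - k + 1) - 1) : ℤ) : ℚ) =
      (2*(x:ℚ) - k + 1) * (2*(x:ℚ) - k) := by push_cast; ring
  rwa [hc] at h0

lemma odd_sq (s x : ℕ) (h : s % 2 = 1) : (1:ℚ) ≤ ((s:ℚ) - 2*(x:ℚ))^2 := by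
  have hne : (s:ℤ) - 2*(x:ℤ) ≠ 0 := by omega
  have h1 : (1:ℤ) ≤ ((s:ℤ) - 2*(x:ℤ))^2 := by
    rcases lt_or_gt_of_ne hne with h' | h' <;> nlinarith
  have h2 : ((1:ℤ):ℚ) ≤ ((((s:ℤ) - 2*(x:ℤ))^2 : ℤ) : ℚ) := by exact_mod_cast h1
  have hc : ((((s:ℤ) - 2*(x:ℤ))^2 : ℤ) : ℚ) = ((s:ℚ) - 2*(x:ℚ))^2 := by push_cast; ring
  rw [hc] at h2
  exact_mod_cast h2

lemma odd_upper_key (k x : ℕ) (A A2 B : ℚ)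
    (hcase : (A = k ∧ A2 = k + 1) ∨ (A = k + 1 ∧ A2 = k))
    (hcb : B = k ∨ B = k + 1) :
    A*(A-1)/2 + A2*(A2-1)/2 + (x:ℚ)*(B - x) + (A - x)*(A2 - B + x)
      ≤ 3*(2*(k:ℚ)+1)^2/8 - (2*(k:ℚ)+1)/2 + 1/8 := by
  rcases hcase with ⟨e1, e2⟩ | ⟨e1, e2⟩ <;> rcases hcb with e3 | e3 <;> rw [e1, e2, e3]
  · nlinarith [consec_q1 x k]
  · nlinarith [consec_q0 x k]
  · nlinarith [consec_q0 x k]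
  · nlinarith [consec_qm1 x k]

lemma arith_upper (n a b a2 b2 x z y w : ℕ)
    (hs : a + b + a2 + b2 = 2 * n) (hn : a + a2 = n)
    (hb1 : a ≤ a2 + 1) (hb2 : a2 ≤ a + 1) (hb3 : b ≤ b2 + 1) (hb4 : b2 ≤ b + 1)
    (hxy : x + y = a) (hzw : z + w = a2) (hxz : x + z = b) :
    ((a.choose 2 + a2.choose 2 + x * z + y * w : ℕ) : ℚ) ≤ maxCrBound n := by
  have hcast : ((a.choose 2 + a2.choose 2 + x * z + y * w : ℕ) : ℚ) =
      (a:ℚ)*((a:ℚ)-1)/2 + (a2:ℚ)*((a2:ℚ)-1)/2 + (x:ℚ)*(z:ℚ) + (y:ℚ)*(w:ℚ) := by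
    push_cast [Nat.cast_choose_two]
    ring
  rw [hcast]
  have hzq : (z:ℚ) = (b:ℚ) - (x:ℚ) := by
    have h' : (x:ℚ) + (z:ℚ) = (b:ℚ) := by exact_mod_cast hxz
    linarith
  have hyq : (y:ℚ) = (a:ℚ) - (x:ℚ) := by
    have h' : (x:ℚ) + (y:ℚ) = (a:ℚ) := by exact_mod_cast hxy
    linarith
  have hwq : (w:ℚ) = (a2:ℚ) - (b:ℚ) + (x:ℚ) := by
    have h' : (z:ℚ) + (w:ℚ) = (a2:ℚ) := by exact_mod_cast hzw
    linarith
  rw [hzq, hyq, hwq]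
  rcases (show n % 2 = 0 ∨ n % 2 = 1 by omega) with he | ho
  · -- n even
    have hA : (a:ℚ) = ((n/2 : ℕ):ℚ) := by exact_mod_cast (show a = n/2 by omega)
    have hA2 : (a2:ℚ) = ((n/2 : ℕ):ℚ) := by exact_mod_cast (show a2 = n/2 by omega)
    have hB : (b:ℚ) = ((n/2 : ℕ):ℚ) := by exact_mod_cast (show b = n/2 by omega)
    have hN : (n:ℚ) = 2 * ((n/2 : ℕ):ℚ) := by exact_mod_cast (show n = 2*(n/2) by omega)
    rcases (show n % 4 = 0 ∨ n % 4 = 2 by omega) with h | h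
    · rw [maxCrBound, if_pos h, hA, hA2, hB, hN]
      nlinarith [sq_nonneg (((n/2 : ℕ):ℚ) - 2*(x:ℚ))]
    · rw [maxCrBound, if_neg (by omega), if_pos h, hA, hA2, hB, hN]
      nlinarith [odd_sq (n/2) x (by omega)]
  · -- n odd
    have hN : (n:ℚ) = 2 * ((n/2 : ℕ):ℚ) + 1 := by
      exact_mod_cast (show n = 2*(n/2) + 1 by omega)
    have hcase : ((a:ℚ) = ((n/2 : ℕ):ℚ) ∧ (a2:ℚ) = ((n/2 : ℕ):ℚ) + 1) ∨
        ((a:ℚ) = ((n/2 : ℕ):ℚ) + 1 ∧ (a2:ℚ) = ((n/2 : ℕ):ℚ)) := by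
      rcases (show (a = n/2 ∧ a2 = n/2 + 1) ∨ (a = n/2 + 1 ∧ a2 = n/2) by omega) with
        ⟨e1, e2⟩ | ⟨e1, e2⟩
      · exact Or.inl ⟨by exact_mod_cast e1, by exact_mod_cast e2⟩
      · exact Or.inr ⟨by exact_mod_cast e1, by exact_mod_cast e2⟩
    have hcb : (b:ℚ) = ((n/2 : ℕ):ℚ) ∨ (b:ℚ) = ((n/2 : ℕ):ℚ) + 1 := by
      rcases (show b = n/2 ∨ b = n/2 + 1 by omega) with e | e
      · exact Or.inl (by exact_mod_cast e)
      · exact Or.inr (by exact_mod_cast e)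
    have key := odd_upper_key (n/2) x (a:ℚ) (a2:ℚ) (b:ℚ) hcase hcb
    rw [maxCrBound, if_neg (by omega), if_neg (by omega), hN]
    exact key

lemma arith_exists (n a b a2 b2 : ℕ)
    (hs : a + b + a2 + b2 = 2 * n) (hn : a + a2 = n)
    (hb1 : a ≤ a2 + 1) (hb2 : a2 ≤ a + 1) (hb3 : b ≤ b2 + 1) (hb4 : b2 ≤ b + 1)
    (ha : 0 < a) (hbp : 0 < b) (ha2p : 0 < a2) (hb2p : 0 < b2) :
    ∃ x z y w : ℕ, x + y = a ∧ z + w = a2 ∧ x + z = b ∧ y + w = b2 ∧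
      ((a.choose 2 + a2.choose 2 + x * z + y * w : ℕ) : ℚ) = maxCrBound n := by
  have hval : ∀ x z y w : ℕ, ((a.choose 2 + a2.choose 2 + x * z + y * w : ℕ) : ℚ) =
      (a:ℚ)*((a:ℚ)-1)/2 + (a2:ℚ)*((a2:ℚ)-1)/2 + (x:ℚ)*(z:ℚ) + (y:ℚ)*(w:ℚ) := by
    intro x z y w
    push_cast [Nat.cast_choose_two]
    ring
  set u := n / 4 with hu
  have hUq : ((u:ℕ):ℚ) = ((n/4 : ℕ):ℚ) := rfl
  rcases (show n % 4 = 0 ∨ n % 4 = 1 ∨ n % 4 = 2 ∨ n % 4 = 3 by omega) with h | h | h | h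
  · -- n = 4u, all blocks 2u
    refine ⟨u, u, u, u, by omega, by omega, by omega, by omega, ?_⟩
    rw [hval]
    have hA : (a:ℚ) = 2*(u:ℚ) := by exact_mod_cast (show a = 2*u by omega)
    have hA2 : (a2:ℚ) = 2*(u:ℚ) := by exact_mod_cast (show a2 = 2*u by omega)
    have hN : (n:ℚ) = 4*(u:ℚ) := by exact_mod_cast (show n = 4*u by omega)
    rw [maxCrBound, if_pos h, hA, hA2, hN]
    ring
  · -- n = 4u+1, k = 2u
    have hN : (n:ℚ) = 4*(u:ℚ) + 1 := by exact_mod_cast (show n = 4*u + 1 by omega)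
    rcases (show (a = 2*u ∧ a2 = 2*u+1) ∨ (a = 2*u+1 ∧ a2 = 2*u) by omega) with
      ⟨e1, e2⟩ | ⟨e1, e2⟩ <;>
    rcases (show (b = 2*u ∧ b2 = 2*u+1) ∨ (b = 2*u+1 ∧ b2 = 2*u) by omega) with
      ⟨e3, e4⟩ | ⟨e3, e4⟩
    · -- (a,b) = (k,k) : (x,z,y,w) = (u,u,u,u+1)
      refine ⟨u, u, u, u+1, by omega, by omega, by omega, by omega, ?_⟩
      rw [hval]
      have hA : (a:ℚ) = 2*(u:ℚ) := by exact_mod_cast e1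
      have hA2 : (a2:ℚ) = 2*(u:ℚ)+1 := by exact_mod_cast e2
      rw [maxCrBound, if_neg (by omega), if_neg (by omega), hA, hA2, hN]
      push_cast
      ring
    · -- (a,b) = (k,k+1) : (u, u+1, u, u)
      refine ⟨u, u+1, u, u, by omega, by omega, by omega, by omega, ?_⟩
      rw [hval]
      have hA : (a:ℚ) = 2*(u:ℚ) := by exact_mod_cast e1
      have hA2 : (a2:ℚ) = 2*(u:ℚ)+1 := by exact_mod_cast e2
      rw [maxCrBound, if_neg (by omega), if_neg (by omega), hA, hA2, hN]
      push_cast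
      ring
    · -- (a,b) = (k+1,k) : (u, u, u+1, u)
      refine ⟨u, u, u+1, u, by omega, by omega, by omega, by omega, ?_⟩
      rw [hval]
      have hA : (a:ℚ) = 2*(u:ℚ)+1 := by exact_mod_cast e1
      have hA2 : (a2:ℚ) = 2*(u:ℚ) := by exact_mod_cast e2
      rw [maxCrBound, if_neg (by omega), if_neg (by omega), hA, hA2, hN]
      push_cast
      ring
    · -- (a,b) = (k+1,k+1) : (u+1, u, u, u)
      refine ⟨u+1, u, u, u, by omega, by omega, by omega, by omega, ?_⟩
      rw [hval]
      have hA : (a:ℚ) = 2*(u:ℚ)+1 := by exact_mod_cast e1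
      have hA2 : (a2:ℚ) = 2*(u:ℚ) := by exact_mod_cast e2
      rw [maxCrBound, if_neg (by omega), if_neg (by omega), hA, hA2, hN]
      push_cast
      ring
  · -- n = 4u+2, all blocks 2u+1 : (u, u+1, u+1, u)
    refine ⟨u, u+1, u+1, u, by omega, by omega, by omega, by omega, ?_⟩
    rw [hval]
    have hA : (a:ℚ) = 2*(u:ℚ)+1 := by exact_mod_cast (show a = 2*u+1 by omega)
    have hA2 : (a2:ℚ) = 2*(u:ℚ)+1 := by exact_mod_cast (show a2 = 2*u+1 by omega)
    have hN : (n:ℚ) = 4*(u:ℚ) + 2 := by exact_mod_cast (show n = 4*u + 2 by omega)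
    rw [maxCrBound, if_neg (by omega), if_pos h, hA, hA2, hN]
    push_cast
    ring
  · -- n = 4u+3, k = 2u+1
    have hN : (n:ℚ) = 4*(u:ℚ) + 3 := by exact_mod_cast (show n = 4*u + 3 by omega)
    rcases (show (a = 2*u+1 ∧ a2 = 2*u+2) ∨ (a = 2*u+2 ∧ a2 = 2*u+1) by omega) with
      ⟨e1, e2⟩ | ⟨e1, e2⟩ <;>
    rcases (show (b = 2*u+1 ∧ b2 = 2*u+2) ∨ (b = 2*u+2 ∧ b2 = 2*u+1) by omega) with
      ⟨e3, e4⟩ | ⟨e3, e4⟩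
    · -- (a,b) = (k,k) : (u, u+1, u+1, u+1)
      refine ⟨u, u+1, u+1, u+1, by omega, by omega, by omega, by omega, ?_⟩
      rw [hval]
      have hA : (a:ℚ) = 2*(u:ℚ)+1 := by exact_mod_cast e1
      have hA2 : (a2:ℚ) = 2*(u:ℚ)+2 := by exact_mod_cast e2
      rw [maxCrBound, if_neg (by omega), if_neg (by omega), hA, hA2, hN]
      push_cast
      ring
    · -- (a,b) = (k,k+1) : (u+1, u+1, u, u+1)
      refine ⟨u+1, u+1, u, u+1, by omega, by omega, by omega, by omega, ?_⟩
      rw [hval]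
      have hA : (a:ℚ) = 2*(u:ℚ)+1 := by exact_mod_cast e1
      have hA2 : (a2:ℚ) = 2*(u:ℚ)+2 := by exact_mod_cast e2
      rw [maxCrBound, if_neg (by omega), if_neg (by omega), hA, hA2, hN]
      push_cast
      ring
    · -- (a,b) = (k+1,k) : (u+1, u, u+1, u+1)
      refine ⟨u+1, u, u+1, u+1, by omega, by omega, by omega, by omega, ?_⟩
      rw [hval]
      have hA : (a:ℚ) = 2*(u:ℚ)+2 := by exact_mod_cast e1
      have hA2 : (a2:ℚ) = 2*(u:ℚ)+1 := by exact_mod_cast e2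
      rw [maxCrBound, if_neg (by omega), if_neg (by omega), hA, hA2, hN]
      push_cast
      ring
    · -- (a,b) = (k+1,k+1) : (u+1, u+1, u+1, u)
      refine ⟨u+1, u+1, u+1, u, by omega, by omega, by omega, by omega, ?_⟩
      rw [hval]
      have hA : (a:ℚ) = 2*(u:ℚ)+2 := by exact_mod_cast e1
      have hA2 : (a2:ℚ) = 2*(u:ℚ)+1 := by exact_mod_cast e2
      rw [maxCrBound, if_neg (by omega), if_neg (by omega), hA, hA2, hN]
      push_cast
      ring


end Aux

/-- For a bichromatic convex point set with a balanced 4-block coloring,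
the maximum number of crossings of a bichromatic perfect matching equals
`3n²/8 − n/2 + c`, where `c = 0, 1/8, −1/2, 1/8` according to `n mod 4 = 0, 1, 2, 3`. -/
theorem stmt2 (n : ℕ) (p : Fin (2 * n) → ℝ × ℝ) (c : Fin (2 * n) → Bool)
    (hconv : ConvexCW (2 * n) p) (hcol : Bichrom n c) (hbal : Balanced4 n c) :
    (∀ f : Fin (2 * n) → Fin (2 * n), IsBPM (2 * n) c f →
        (crNum (2 * n) p f : ℚ) ≤ maxCrBound n) ∧
    (∃ f : Fin (2 * n) → Fin (2 * n), IsBPM (2 * n) c f ∧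
        (crNum (2 * n) p f : ℚ) = maxCrBound n) := by
  classical
  obtain ⟨t, r1, b1, r2, b2, h4, hbal'⟩ := hbal
  obtain ⟨hr1p, hb1p, hr2p, hb2p, hsum, hrr, hcform⟩ := h4
  have hA12 : r1 ≤ r2 + 1 := hbal' r1 (by simp) r2 (by simp)
  have hA21 : r2 ≤ r1 + 1 := hbal' r2 (by simp) r1 (by simp)
  have hB12 : b1 ≤ b2 + 1 := hbal' b1 (by simp) b2 (by simp)
  have hB21 : b2 ≤ b1 + 1 := hbal' b2 (by simp) b1 (by simp)
  have hn2 : 2 ≤ n := by omega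
  have hmn : (0:ℕ) < 2 * n := by omega
  have : NeZero (2 * n) := ⟨by omega⟩
  set e : Fin (2 * n) ≃ Fin (2 * n) := Equiv.addLeft t with he
  have heapp : ∀ j : Fin (2 * n), e j = t + j := fun j => rfl
  have hc0 : ∀ j : Fin (2 * n), c (e j) = Aux.c4 (2 * n) r1 b1 r2 j := by
    intro j
    rw [heapp, hcform j]
    rfl
  have hconv' : ConvexCW (2 * n) (fun i => p (e i)) := by
    have := Aux.convexCW_shift hconv t
    convert this using 2
    rw [heapp]
  have hm' : 2 * n = r1 + b1 + r2 + b2 := hsum.symm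
  constructor
  · intro f hf
    obtain ⟨hinv, hfix, hcolf⟩ := hf
    set f' : Fin (2 * n) → Fin (2 * n) := fun i => e.symm (f (e i)) with hf'
    have hinv' : Function.Involutive f' := by
      intro i
      simp only [hf', Equiv.apply_symm_apply]
      rw [hinv (e i), Equiv.symm_apply_apply]
    have hfix' : ∀ i, f' i ≠ i := by
      intro i h
      apply hfix (e i)
      have := congrArg e h
      simp only [hf', Equiv.apply_symm_apply] at this
      exact this
    have hcol' : ∀ i, Aux.c4 (2 * n) r1 b1 r2 (f' i) ≠ Aux.c4 (2 * n) r1 b1 r2 i := by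
      intro i
      rw [← hc0, ← hc0]
      simp only [hf', Equiv.apply_symm_apply]
      exact hcolf (e i)
    have h1 : crNum (2 * n) p f = crNum (2 * n) (fun i => p (e i)) f' :=
      (Aux.crNum_reindex e hinv hfix p).symm
    have h2 : crNum (2 * n) (fun i => p (e i)) f' = Aux.Dcount (2 * n) f' :=
      Aux.crNum_eq_D hconv' hinv' hfix'
    obtain ⟨x, z, y, w, hxy, hzw, hxz, hD⟩ :=
      Aux.upper_bound r1 b1 r2 b2 hm' hinv' hcol'
    have harith := Aux.arith_upper n r1 b1 r2 b2 x z y w hsum hrr hA12 hA21 hB12 hB21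
      hxy hzw hxz
    calc (crNum (2 * n) p f : ℚ) = (Aux.Dcount (2 * n) f' : ℚ) := by rw [h1, h2]
      _ ≤ ((r1.choose 2 + r2.choose 2 + x * z + y * w : ℕ) : ℚ) := by exact_mod_cast hD
      _ ≤ maxCrBound n := harith
  · obtain ⟨x, z, y, w, hxy, hzw, hxz, hyw, hvaleq⟩ :=
      Aux.arith_exists n r1 b1 r2 b2 hsum hrr hA12 hA21 hB12 hB21 hr1p hb1p hr2p hb2p
    obtain ⟨f0, hinv0, hfix0, hcol0, hD0⟩ :=
      Aux.construction r1 b1 r2 b2 x z y w hm' hxy hzw hxz hyw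
    refine ⟨fun u => e (f0 (e.symm u)), ⟨?_, ?_, ?_⟩, ?_⟩
    · intro u
      simp only [Equiv.symm_apply_apply]
      rw [hinv0 (e.symm u), Equiv.apply_symm_apply]
    · intro u h
      apply hfix0 (e.symm u)
      have := congrArg e.symm h
      simp only [Equiv.symm_apply_apply] at this
      exact this
    · intro u
      have h1 : c (e (f0 (e.symm u))) = Aux.c4 (2 * n) r1 b1 r2 (f0 (e.symm u)) :=
        hc0 _
      have h2 : c u = Aux.c4 (2 * n) r1 b1 r2 (e.symm u) := by
        have := hc0 (e.symm u)
        rw [Equiv.apply_symm_apply] at this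
        exact this
      rw [h1, h2]
      exact hcol0 (e.symm u)
    · have hfix1 : ∀ i, (fun u => e (f0 (e.symm u))) i ≠ i := by
        intro u h
        apply hfix0 (e.symm u)
        have := congrArg e.symm h
        simp only [Equiv.symm_apply_apply] at this
        exact this
      have hinv1 : Function.Involutive (fun u => e (f0 (e.symm u))) := by
        intro u
        simp only [Equiv.symm_apply_apply]
        rw [hinv0 (e.symm u), Equiv.apply_symm_apply]
      have hre := Aux.crNum_reindex e hinv1 hfix1 p
      have hfeq : (fun i => e.symm ((fun u => e (f0 (e.symm u))) (e i))) = f0 := by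
        funext i
        simp only [Equiv.symm_apply_apply]
      rw [hfeq] at hre
      rw [← hre, Aux.crNum_eq_D hconv' hinv0 hfix0, hD0]
      exact hvaleq
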